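/- Let 1 ≤ p < ∞, let μ ∈ 𝒫(ℝ^d) have compact support, and let A ⊂ ℝ^d be a bounded Borel set with μ(A) > 0. Then W_p^p(μ|_A, μ) ≤ (1/μ(A) − 1) · diam(spt(μ))^p, where μ|_A = μ(· | A) is the conditional probability measure of μ given A. -/

import Mathlib

open MeasureTheory Metric

noncomputable section

/-- The topological support of a Borel measure. -/
def msupport {X : Type*} [TopologicalSpace X] [MeasurableSpace X] (μ : Measure X) : Set X :=
  {x | ∀ U : Set X, IsOpen U → x ∈ U → 0 < μ U}

/-- The p-th power of the p-Wasserstein distance, as infimum of transport cost over couplings. -/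
def Wpp {E : Type*} [NormedAddCommGroup E] [MeasurableSpace E]
    (p : ℝ) (μ ν : Measure E) : ℝ :=
  sInf {r | ∃ π : Measure (E × E),
    π.map Prod.fst = μ ∧ π.map Prod.snd = ν ∧ r = ∫ z, ‖z.1 - z.2‖ ^ p ∂π}

lemma msupport_compl_null {X : Type*} [TopologicalSpace X] [MeasurableSpace X]
    [SecondCountableTopology X] (μ : Measure X) : μ (msupport μ)ᶜ = 0 := by
  obtain ⟨b, hbc, -, hb⟩ := TopologicalSpace.exists_countable_basis X
  have hsub : (msupport μ)ᶜ ⊆ ⋃₀ {v | v ∈ b ∧ μ v = 0} := by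
    intro x hx
    simp only [msupport, Set.mem_compl_iff, Set.mem_setOf_eq, not_forall] at hx
    obtain ⟨U, hU, hxU, hU0⟩ := hx
    have hU0' : μ U = 0 := by simpa using hU0
    obtain ⟨v, hvb, hxv, hvU⟩ := hb.exists_subset_of_mem_open hxU hU
    exact ⟨v, ⟨hvb, measure_mono_null hvU hU0'⟩, hxv⟩
  refine measure_mono_null hsub ?_
  exact (measure_sUnion_null_iff (hbc.mono fun v hv => hv.1)).2 fun s hs => hs.2

/-- Truncation error bound for compactly supported μ:
W_p^p(μ|_A, μ) ≤ (1/μ(A) − 1)·diam(spt μ)^p, where μ|_A is the conditional measure of μ on A. -/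
theorem stmt11 {d : ℕ} (p : ℝ) (hp : 1 ≤ p)
    (μ : Measure (EuclideanSpace ℝ (Fin d))) [IsProbabilityMeasure μ]
    (hcs : IsCompact (msupport μ))
    (A : Set (EuclideanSpace ℝ (Fin d))) (hA : MeasurableSet A)
    (hAb : Bornology.IsBounded A) (hApos : 0 < μ A) :
    Wpp p ((μ A)⁻¹ • μ.restrict A) μ ≤
      ((μ A).toReal⁻¹ - 1) * (Metric.diam (msupport μ)) ^ p := by
  classical
  let E := EuclideanSpace ℝ (Fin d)
  set S := msupport μ with hS
  have hSnull : μ Sᶜ = 0 := msupport_compl_null μ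
  have hμA0 : μ A ≠ 0 := hApos.ne'
  have hμAtop : μ A ≠ ⊤ := measure_ne_top μ A
  have hp0 : (0:ℝ) < p := lt_of_lt_of_le one_pos hp
  set D : ℝ := diam S ^ p with hDdef
  have hD0 : 0 ≤ D := Real.rpow_nonneg diam_nonneg p
  set f : E × E → ℝ := fun z => ‖z.1 - z.2‖ ^ p with hfdef
  have hf_cont : Continuous f :=
    (continuous_fst.sub continuous_snd).norm.rpow_const fun _ => Or.inr hp0.le
  -- the coupling
  set ρ : Measure E := (μ A)⁻¹ • μ.restrict A with hρdef
  set τ : Measure E := μ.restrict Aᶜ with hτdef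
  have hρuniv : ρ Set.univ = 1 := by
    simp only [hρdef, Measure.smul_apply, smul_eq_mul, Measure.restrict_apply_univ]
    exact ENNReal.inv_mul_cancel hμA0 hμAtop
  haveI : IsProbabilityMeasure ρ := ⟨hρuniv⟩
  set diag : E → E × E := fun x => (x, x) with hdiag
  have hdiag_meas : Measurable diag := measurable_id.prodMk measurable_id
  set π1 : Measure (E × E) := (μ.restrict A).map diag with hπ1
  set π2 : Measure (E × E) := ρ.prod τ with hπ2
  set π : Measure (E × E) := π1 + π2 with hπ
  -- marginals
  have hmap1 : π1.map Prod.fst = μ.restrict A ∧ π1.map Prod.snd = μ.restrict A := by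
    have h1 : (Prod.fst ∘ diag) = id := rfl
    have h2 : (Prod.snd ∘ diag) = id := rfl
    constructor
    · rw [hπ1, Measure.map_map measurable_fst hdiag_meas, h1, Measure.map_id]
    · rw [hπ1, Measure.map_map measurable_snd hdiag_meas, h2, Measure.map_id]
  have hfst : π.map Prod.fst = (μ A)⁻¹ • μ.restrict A := by
    rw [hπ, Measure.map_add _ _ measurable_fst, hmap1.1, hπ2, Measure.map_fst_prod]
    rw [hτdef, Measure.restrict_apply_univ, hρdef, smul_smul]
    have h1 : μ A + μ Aᶜ = 1 := by
      rw [measure_add_measure_compl hA, measure_univ]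
    calc μ.restrict A + (μ Aᶜ * (μ A)⁻¹) • μ.restrict A
        = (μ A * (μ A)⁻¹) • μ.restrict A + (μ Aᶜ * (μ A)⁻¹) • μ.restrict A := by
          rw [ENNReal.mul_inv_cancel hμA0 hμAtop, one_smul]
      _ = ((μ A + μ Aᶜ) * (μ A)⁻¹) • μ.restrict A := by rw [add_mul, add_smul]
      _ = (μ A)⁻¹ • μ.restrict A := by rw [h1, one_mul]
  have hsnd : π.map Prod.snd = μ := by
    rw [hπ, Measure.map_add _ _ measurable_snd, hmap1.2, hπ2, Measure.map_snd_prod,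
      hρuniv, one_smul, hτdef, Measure.restrict_add_restrict_compl hA]
  -- a.e. bound on π2
  have hρScnull : ρ Sᶜ = 0 := by
    have : μ.restrict A Sᶜ = 0 :=
      le_antisymm (le_trans (Measure.restrict_le_self _) hSnull.le) zero_le
    simp [hρdef, this]
  have hτScnull : τ Sᶜ = 0 :=
    le_antisymm (le_trans (Measure.restrict_le_self _) hSnull.le) zero_le
  have hae : ∀ᵐ z ∂π2, ‖f z‖ ≤ D := by
    have hnull : π2 {z : E × E | ¬ (z.1 ∈ S ∧ z.2 ∈ S)} = 0 := by
      refine measure_mono_null (t := Sᶜ ×ˢ (Set.univ : Set E) ∪ (Set.univ : Set E) ×ˢ Sᶜ)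
        ?_ ?_
      · intro z hz
        simp only [Set.mem_setOf_eq, not_and_or] at hz
        rcases hz with h | h
        · exact Or.inl ⟨h, trivial⟩
        · exact Or.inr ⟨trivial, h⟩
      · refine le_antisymm (le_trans (measure_union_le _ _) ?_) zero_le
        rw [hπ2, Measure.prod_prod, Measure.prod_prod, hρScnull, hτScnull]
        simp
    rw [ae_iff]
    refine measure_mono_null ?_ hnull
    intro z hz
    simp only [Set.mem_setOf_eq] at hz ⊢
    intro ⟨h1, h2⟩
    apply hz
    rw [Real.norm_of_nonneg (Real.rpow_nonneg (norm_nonneg _) p)]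
    refine Real.rpow_le_rpow (norm_nonneg _) ?_ hp0.le
    rw [← dist_eq_norm]
    exact dist_le_diam_of_mem hcs.isBounded h1 h2
  -- integrability
  have hfm : AEStronglyMeasurable f π2 := hf_cont.aestronglyMeasurable
  have hint2 : Integrable f π2 := Integrable.mono' (integrable_const D) hfm hae
  have hint1 : Integrable f π1 := by
    rw [hπ1, integrable_map_measure hf_cont.aestronglyMeasurable hdiag_meas.aemeasurable]
    have : (f ∘ diag) = fun _ => (0:ℝ) := by
      funext x; simp [hfdef, hdiag, Real.zero_rpow hp0.ne']
    rw [this]; exact integrable_const 0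
  -- the cost
  have hcost1 : ∫ z, f z ∂π1 = 0 := by
    rw [hπ1, integral_map hdiag_meas.aemeasurable hf_cont.aestronglyMeasurable]
    simp [hfdef, hdiag, Real.zero_rpow hp0.ne']
  have hπ2univ : (π2 Set.univ).toReal = (μ Aᶜ).toReal := by
    rw [hπ2, ← Set.univ_prod_univ, Measure.prod_prod, hρuniv, one_mul, hτdef,
      Measure.restrict_apply_univ]
  have hcost2 : ∫ z, f z ∂π2 ≤ D * (μ Aᶜ).toReal := by
    calc ∫ z, f z ∂π2 ≤ ‖∫ z, f z ∂π2‖ := le_abs_self _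
      _ ≤ D * (π2 Set.univ).toReal := norm_integral_le_of_norm_le_const hae
      _ = D * (μ Aᶜ).toReal := by rw [hπ2univ]
  have hcost : ∫ z, f z ∂π ≤ D * (μ Aᶜ).toReal := by
    rw [hπ, integral_add_measure hint1 hint2, hcost1, zero_add]
    exact hcost2
  -- final arithmetic
  set a : ℝ := (μ A).toReal with ha
  have ha0 : 0 < a := ENNReal.toReal_pos hμA0 hμAtop
  have ha1 : a ≤ 1 := by
    have h := ENNReal.toReal_mono (by norm_num : (1 : ENNReal) ≠ ⊤)
      (prob_le_one (μ := μ) (s := A))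
    simpa using h
  have hcompl : (μ Aᶜ).toReal = 1 - a := by
    rw [measure_compl hA hμAtop, measure_univ, ENNReal.toReal_sub_of_le prob_le_one (by norm_num)]
    norm_num
    rfl
  have hfinal : D * (μ Aᶜ).toReal ≤ (a⁻¹ - 1) * D := by
    rw [hcompl]
    have hinv : a * a⁻¹ = 1 := mul_inv_cancel₀ ha0.ne'
    nlinarith [mul_nonneg hD0 (sub_nonneg.2 ha1)]
  -- conclude
  have hbdd : BddBelow {r | ∃ π' : Measure (E × E),
      π'.map Prod.fst = (μ A)⁻¹ • μ.restrict A ∧ π'.map Prod.snd = μ ∧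
      r = ∫ z, ‖z.1 - z.2‖ ^ p ∂π'} := by
    refine ⟨0, ?_⟩
    rintro r ⟨π', -, -, rfl⟩
    exact integral_nonneg fun z => Real.rpow_nonneg (norm_nonneg _) p
  refine csInf_le_of_le hbdd ⟨π, hfst, hsnd, rfl⟩ (le_trans hcost hfinal)
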